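/- For every nonnegative integer n and every real ℓ, the double sum over i + j = n of (-1)^i * C(ℓ - 1 - i, i) * (sum over k from 0 to j of C(2n + 1, k) * C(ℓ - 1 - 2i, j - k)) equals the sum over k from 0 to n of C(2n + 1, k). -/

import Mathlib

open Polynomial Finset

/-- Generalized binomial coefficient for a real upper argument. -/
noncomputable def gchoose (x : ℝ) (k : ℕ) : ℝ :=
  (descPochhammer ℝ k).eval x / k.factorial

lemma gchoose_zero (x : ℝ) : gchoose x 0 = 1 := by
  simp [gchoose]

lemma gchoose_pascal (x : ℝ) (k : ℕ) :
    gchoose x (k + 1) = gchoose (x - 1) (k + 1) + gchoose (x - 1) k := by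
  have h1 : (descPochhammer ℝ (k+1)).eval x = x * (descPochhammer ℝ k).eval (x - 1) := by
    rw [descPochhammer_succ_left]
    simp [eval_comp]
  have h2 : (descPochhammer ℝ (k+1)).eval (x-1)
      = (descPochhammer ℝ k).eval (x-1) * (x - 1 - k) := descPochhammer_succ_eval k (x-1)
  have hf : ((k+1).factorial : ℝ) = ((k:ℝ)+1) * k.factorial := by
    rw [Nat.factorial_succ]; push_cast; ring
  have hk : (k.factorial : ℝ) ≠ 0 := Nat.cast_ne_zero.mpr k.factorial_ne_zero
  have hk1 : ((k:ℝ)+1) ≠ 0 := by positivity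
  rw [gchoose, gchoose, gchoose, h1, h2, hf]
  field_simp
  ring

lemma gchoose_natCast (a k : ℕ) :
    gchoose (a : ℝ) k = (a.descFactorial k : ℝ) / k.factorial := by
  rw [gchoose, descPochhammer_eval_eq_descFactorial]

lemma gchoose_nat_eq_zero {a k : ℕ} (h : a < k) : gchoose (a : ℝ) k = 0 := by
  rw [gchoose_natCast, Nat.descFactorial_eq_zero_iff_lt.mpr h]
  simp

lemma gchoose_nat_self (a : ℕ) : gchoose (a : ℝ) a = 1 := by
  rw [gchoose_natCast, Nat.descFactorial_self]
  exact div_self (Nat.cast_ne_zero.mpr a.factorial_ne_zero)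

/-- The alternating sum `f m x = ∑ i, (-1)^i C(x-i,i) C(x-2i, m-i)`. -/
noncomputable def ff (m : ℕ) (x : ℝ) : ℝ :=
  ∑ i ∈ Finset.range (m+1), (-1:ℝ)^i * gchoose (x - i) i * gchoose (x - 2*i) (m - i)

/-- The companion sum `A m x = ∑ i, (-1)^i C(x-i,i) C(x-1-2i, m-i)`. -/
noncomputable def aa (m : ℕ) (x : ℝ) : ℝ :=
  ∑ i ∈ Finset.range (m+1), (-1:ℝ)^i * gchoose (x - i) i * gchoose (x - 1 - 2*i) (m - i)

lemma ff_succ (m : ℕ) (x : ℝ) : ff (m+1) x = aa (m+1) x + aa m x := by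
  rw [ff, aa, aa, Finset.sum_range_succ, Finset.sum_range_succ (n := m+1)]
  have hlast : gchoose (x - 2*(m+1 : ℕ)) (m+1 - (m+1)) = gchoose (x - 1 - 2*(m+1:ℕ)) (m+1-(m+1)) := by
    simp [gchoose_zero]
  rw [hlast]
  have hmain : ∑ i ∈ Finset.range (m+1), (-1:ℝ)^i * gchoose (x - i) i * gchoose (x - 2*i) (m+1 - i)
      = ∑ i ∈ Finset.range (m+1), ((-1:ℝ)^i * gchoose (x - i) i * gchoose (x - 1 - 2*i) (m+1 - i)
        + (-1:ℝ)^i * gchoose (x - i) i * gchoose (x - 1 - 2*i) (m - i)) := by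
    refine Finset.sum_congr rfl fun i hi => ?_
    have hi' : i ≤ m := by simpa [Nat.lt_succ_iff] using hi
    have h1 : m + 1 - i = (m - i) + 1 := by omega
    rw [h1, gchoose_pascal]
    have : x - 2*(i:ℝ) - 1 = x - 1 - 2*(i:ℝ) := by ring
    rw [this]
    ring
  rw [hmain, Finset.sum_add_distrib]
  ring

lemma aa_succ (m : ℕ) (x : ℝ) : aa (m+1) x = ff (m+1) (x-1) - aa m (x-2) := by
  have key : aa (m+1) x - ff (m+1) (x-1) = - aa m (x-2) := by
    rw [aa, ff, ← Finset.sum_sub_distrib]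
    have step : ∀ i ∈ Finset.range (m+2),
        (-1:ℝ)^i * gchoose (x - i) i * gchoose (x - 1 - 2*i) (m+1 - i)
          - (-1:ℝ)^i * gchoose (x - 1 - i) i * gchoose (x - 1 - 2*i) (m+1 - i)
        = (-1:ℝ)^i * (gchoose (x - i) i - gchoose (x - 1 - i) i) * gchoose (x - 1 - 2*i) (m+1 - i) := by
      intro i _; ring
    rw [Finset.sum_congr rfl step, Finset.sum_range_succ']
    have h0 : (-1:ℝ)^0 * (gchoose (x - (0:ℕ)) 0 - gchoose (x - 1 - (0:ℕ)) 0) * gchoose (x - 1 - 2*(0:ℕ)) (m+1-0) = 0 := by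
      simp [gchoose_zero]
    rw [h0, add_zero, aa, ← Finset.sum_neg_distrib]
    refine Finset.sum_congr rfl fun i _ => ?_
    have hp : gchoose (x - ((i:ℝ)+1)) (i+1) - gchoose (x - ((i:ℝ)+1) - 1) (i+1)
        = gchoose (x - ((i:ℝ)+1) - 1) i := by
      rw [gchoose_pascal (x - ((i:ℝ)+1)) i]; ring
    push_cast
    have e1 : x - 1 - ((i:ℝ)+1) = x - ((i:ℝ)+1) - 1 := by ring
    rw [e1, hp]
    have e2 : x - ((i:ℝ)+1) - 1 = x - 2 - i := by ring
    have e3 : x - 1 - 2*((i:ℝ)+1) = x - 2 - 1 - 2*(i:ℝ) := by ring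
    rw [e2, e3]
    ring

  linarith [key]

lemma ff_base (m : ℕ) : ff m (m : ℝ) = 1 := by
  rw [ff, Finset.sum_eq_single 0]
  · simp [gchoose_zero, gchoose_nat_self]
  · intro i hi hne
    have hi' : i ≤ m := by simpa [Nat.lt_succ_iff] using hi
    have hi1 : 1 ≤ i := Nat.one_le_iff_ne_zero.mpr hne
    rcases le_or_gt (2*i) m with h2 | h2
    · have : (m:ℝ) - 2*i = ((m - 2*i : ℕ) : ℝ) := by push_cast [h2]; ring
      rw [this, gchoose_nat_eq_zero (by omega)]
      ring
    · have : (m:ℝ) - i = ((m - i : ℕ) : ℝ) := by push_cast [hi']; ring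
      rw [this, gchoose_nat_eq_zero (by omega)]
      ring
  · intro h
    exact absurd (Finset.mem_range.mpr (Nat.succ_pos m)) h

lemma ff_poly (m : ℕ) : ∃ p : Polynomial ℝ, ∀ x, p.eval x = ff m x := by
  refine ⟨∑ i ∈ Finset.range (m+1),
      Polynomial.C ((-1:ℝ)^i / ((i.factorial : ℝ) * ((m-i).factorial : ℝ))) *
        ((descPochhammer ℝ i).comp (X - C (i:ℝ))) *
        ((descPochhammer ℝ (m-i)).comp (X - C (2*(i:ℝ)))), fun x => ?_⟩
  rw [ff, Polynomial.eval_finset_sum]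
  refine Finset.sum_congr rfl fun i _ => ?_
  have h1 : ((i.factorial : ℝ)) ≠ 0 := Nat.cast_ne_zero.mpr i.factorial_ne_zero
  have h2 : (((m-i).factorial : ℝ)) ≠ 0 := Nat.cast_ne_zero.mpr (m-i).factorial_ne_zero
  simp only [eval_mul, eval_C, eval_comp, eval_sub, eval_X, gchoose]
  field_simp

lemma poly_const_of_periodic (p : Polynomial ℝ) (h : ∀ x : ℝ, p.eval (x+1) = p.eval x)
    (x y : ℝ) : p.eval x = p.eval y := by
  have key : p - C (p.eval 0) = 0 := by
    apply Polynomial.eq_zero_of_infinite_isRoot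
    apply Set.infinite_of_injective_forall_mem (f := (Nat.cast : ℕ → ℝ)) Nat.cast_injective
    intro n
    simp only [Set.mem_setOf_eq, IsRoot, eval_sub, eval_C, sub_eq_zero]
    induction n with
    | zero => simp
    | succ k ih => push_cast; rw [h (k:ℝ)]; exact_mod_cast ih
  have hx := congrArg (Polynomial.eval x) key
  have hy := congrArg (Polynomial.eval y) key
  simp only [eval_sub, eval_C, eval_zero, sub_eq_zero] at hx hy
  rw [hx, hy]

lemma ff_aa_eq (m : ℕ) :
    (∀ x : ℝ, ff m x = 1) ∧ (∀ x : ℝ, aa m x = if Even m then 1 else 0) := by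
  induction m with
  | zero =>
    constructor
    · intro x; simp [ff, gchoose_zero]
    · intro x; simp [aa, gchoose_zero]
  | succ m ih =>
    obtain ⟨ihf, iha⟩ := ih
    have hshift : ∀ x : ℝ, ff (m+1) x = ff (m+1) (x-1) := by
      intro x
      rw [ff_succ, aa_succ, iha x, iha (x-2)]
      ring
    obtain ⟨p, hp⟩ := ff_poly (m+1)
    have hper : ∀ x : ℝ, p.eval (x+1) = p.eval x := by
      intro x
      rw [hp, hp, hshift (x+1)]
      norm_num
    have hf : ∀ x : ℝ, ff (m+1) x = 1 := by
      intro x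
      rw [← hp, poly_const_of_periodic p hper x (((m+1:ℕ)):ℝ), hp, ff_base]
    refine ⟨hf, fun x => ?_⟩
    have := ff_succ m x
    rw [hf x, iha x] at this
    rcases Nat.even_or_odd m with he | ho
    · have h1 : ¬ Even (m+1) := by simp [Nat.even_add_one, he]
      rw [if_neg h1]
      rw [if_pos he] at this
      linarith
    · have h1 : Even (m+1) := Odd.add_one ho
      rw [if_pos h1]
      rw [if_neg (Nat.not_even_iff_odd.mpr ho)] at this
      linarith

theorem double_sum_collapse (n : ℕ) (ℓ : ℝ) :
    ∑ ij ∈ Finset.HasAntidiagonal.antidiagonal n,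
        (-1 : ℝ) ^ ij.1 * gchoose (ℓ - 1 - ij.1) ij.1 *
          (∑ k ∈ Finset.range (ij.2 + 1),
            ((2 * n + 1).choose k : ℝ) * gchoose (ℓ - 1 - 2 * ij.1) (ij.2 - k)) =
      ∑ k ∈ Finset.range (n + 1), ((2 * n + 1).choose k : ℝ) := by
  rw [Finset.Nat.sum_antidiagonal_eq_sum_range_succ_mk]
  have lhs_eq : ∑ i ∈ Finset.range (n+1),
      (-1:ℝ)^i * gchoose (ℓ - 1 - i) i *
        (∑ k ∈ Finset.range ((n - i) + 1),
          ((2*n+1).choose k : ℝ) * gchoose (ℓ - 1 - 2*i) ((n - i) - k))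
      = ∑ i ∈ Finset.range (n+1), ∑ k ∈ Finset.range ((n-i)+1),
          (-1:ℝ)^i * gchoose (ℓ - 1 - i) i *
            (((2*n+1).choose k : ℝ) * gchoose (ℓ - 1 - 2*i) ((n - i) - k)) := by
    refine Finset.sum_congr rfl fun i _ => ?_
    rw [Finset.mul_sum]
  rw [lhs_eq]
  rw [Finset.sum_comm' (s' := fun k => Finset.range (n - k + 1)) (t' := Finset.range (n+1))
    (by intro i k; simp only [Finset.mem_range]; omega)]
  refine Finset.sum_congr rfl fun k hk => ?_
  have hk' : k ≤ n := by simpa [Nat.lt_succ_iff] using hk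
  have : ∑ i ∈ Finset.range (n - k + 1),
      (-1:ℝ)^i * gchoose (ℓ - 1 - i) i *
        (((2*n+1).choose k : ℝ) * gchoose (ℓ - 1 - 2*i) ((n - i) - k))
      = ((2*n+1).choose k : ℝ) * ff (n - k) (ℓ - 1) := by
    rw [ff, Finset.mul_sum]
    refine Finset.sum_congr rfl fun i hi => ?_
    have : n - i - k = n - k - i := by omega
    rw [this]
    ring
  rw [this, (ff_aa_eq (n-k)).1 (ℓ - 1), mul_one]
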